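/- Let p be a prime, s ≥ 1, F_q a finite field of characteristic p, γ ∈ F_q nonzero, n ≥ 1. Let k, τ, m be integers with 1 ≤ k ≤ s-1, 1 ≤ τ ≤ p-1, and 0 ≤ m < p^{s-k} - (τ-1)p^{s-k-1} - 1. Then the Hamming weight of (x^n + γ)^{m + p^s - p^{s-k} + (τ-1)p^{s-k-1} + 1} in F_q[x] is at least (τ+1)p^k. -/

import Mathlib

open Polynomial Finset

lemma lucas_step (p : ℕ) [Fact p.Prime] (a b : ℕ) :
    ((a.choose b : ZMod p)) = ((a % p).choose (b % p) : ZMod p) * ((a / p).choose (b / p) : ZMod p) := by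
  have h := Choose.choose_modEq_choose_mod_mul_choose_div_nat (p := p) (n := a) (k := b)
  have := (ZMod.natCast_eq_natCast_iff _ _ _).mpr h
  push_cast at this
  exact this

lemma block_lucas (p : ℕ) [Fact p.Prime] :
    ∀ (c e1 e0 j1 j0 : ℕ), e0 < p ^ c → j0 < p ^ c →
      ((e1 * p ^ c + e0).choose (j1 * p ^ c + j0) : ZMod p)
        = ((e1.choose j1 : ZMod p)) * ((e0.choose j0 : ZMod p))
  | 0, e1, e0, j1, j0, he, hj => by
      rw [pow_zero] at he hj
      have h1 : e0 = 0 := by omega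
      have h2 : j0 = 0 := by omega
      subst h1; subst h2; simp
  | (c+1), e1, e0, j1, j0, he, hj => by
      have hp : 0 < p := (Fact.out : p.Prime).pos
      have hQ : p ^ (c+1) = p * p ^ c := by ring
      have hmod : ∀ x1 x0 : ℕ, (x1 * p ^ (c+1) + x0) % p = x0 % p := by
        intro x1 x0
        rw [hQ, show x1 * (p * p ^ c) + x0 = p * (x1 * p ^ c) + x0 by ring, Nat.mul_add_mod]
      have hdiv : ∀ x1 x0 : ℕ, (x1 * p ^ (c+1) + x0) / p = x1 * p ^ c + x0 / p := by
        intro x1 x0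
        rw [hQ, show x1 * (p * p ^ c) + x0 = p * (x1 * p ^ c) + x0 by ring,
          Nat.mul_add_div hp]
      have he' : e0 / p < p ^ c := Nat.div_lt_of_lt_mul (by rw [← hQ]; exact he)
      have hj' : j0 / p < p ^ c := Nat.div_lt_of_lt_mul (by rw [← hQ]; exact hj)
      rw [lucas_step, hmod, hmod, hdiv, hdiv, block_lucas p c e1 (e0/p) j1 (j0/p) he' hj',
        lucas_step p e0 j0]
      ring

lemma choose_small_ne_zero (p : ℕ) (hp : p.Prime) {a b : ℕ} (hb : b ≤ a) (ha : a < p) :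
    ((a.choose b : ZMod p)) ≠ 0 := by
  have hpos : 0 < a.choose b := Nat.choose_pos hb
  have hnd : ¬ p ∣ a.choose b := by
    intro hdvd
    have h1 : 1 ≤ (a.choose b).factorization p :=
      (Nat.Prime.dvd_iff_one_le_factorization hp hpos.ne').mp hdvd
    have h2 : (a.choose b).factorization p ≤ Nat.log p a := Nat.factorization_choose_le_log
    have h3 : Nat.log p a = 0 := Nat.log_eq_zero_iff.mpr (Or.inl ha)
    omega
  simpa [ZMod.natCast_eq_zero_iff] using hnd

lemma choose_pow_sub_one_ne_zero (p : ℕ) [Fact p.Prime] :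
    ∀ (k a : ℕ), a < p ^ k → (((p ^ k - 1).choose a : ZMod p)) ≠ 0
  | 0, a, ha => by
      rw [pow_zero] at ha
      have : a = 0 := by omega
      subst this; simp
  | (k+1), a, ha => by
      have hp : p.Prime := Fact.out
      have hp2 : 2 ≤ p := hp.two_le
      have hpk : 1 ≤ p ^ k := Nat.one_le_pow _ _ hp.pos
      have hpe : p ^ (k+1) = p ^ k * p := pow_succ p k
      have hple : p ≤ p ^ k * p := Nat.le_mul_of_pos_left p hpk
      have hdecomp : p ^ (k+1) - 1 = (p ^ k - 1) * p ^ 1 + (p - 1) := by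
        rw [pow_one, Nat.sub_mul]
        omega
      have hadec : a = (a / p) * p ^ 1 + a % p := by
        rw [pow_one, mul_comm]; exact ((Nat.div_add_mod a p)).symm
      rw [hdecomp]
      conv_lhs => rw [hadec]
      rw [block_lucas p 1 (p^k-1) (p-1) (a/p) (a%p)
        (by rw [pow_one]; omega) (by rw [pow_one]; exact Nat.mod_lt _ hp.pos)]
      have hap : a / p < p ^ k := Nat.div_lt_of_lt_mul (by rw [mul_comm, ← hpe]; exact ha)
      have hmp : a % p < p := Nat.mod_lt _ hp.pos
      exact mul_ne_zero (choose_pow_sub_one_ne_zero p k (a/p) hap)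
        (choose_small_ne_zero p hp (by omega) (by omega))

lemma coeff_pow_eq (F : Type*) [Field F] (γ : F) (n : ℕ) (hn : 0 < n) (e j : ℕ) (hj : j ≤ e) :
    (((X ^ n + C γ) ^ e : F[X])).coeff (n * j) = (e.choose j : F) * γ ^ (e - j) := by
  rw [add_pow, finset_sum_coeff]
  have hterm : ∀ i : ℕ, ((X ^ n : F[X]) ^ i * C γ ^ (e - i) * (e.choose i : F[X]))
      = C (γ ^ (e - i) * (e.choose i : F)) * X ^ (n * i) := by
    intro i
    rw [C_mul, C_eq_natCast, pow_mul, ← C_pow]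
    ring
  simp only [hterm, coeff_C_mul, coeff_X_pow]
  rw [Finset.sum_eq_single j]
  · simp [mul_comm]
  · intro i hi hij
    have : ¬ (n * j = n * i) := fun h => hij (Nat.eq_of_mul_eq_mul_left hn h).symm
    simp [this]
  · intro h
    exact absurd (Finset.mem_range.mpr (Nat.lt_succ_of_le hj)) h

lemma digit_split (P : ℕ) (hP : 0 < P) {a1 a2 w1 w2 : ℕ} (h1 : w1 < P) (h2 : w2 < P)
    (h : a1 * P + w1 = a2 * P + w2) : a1 = a2 ∧ w1 = w2 := by
  have d1 : (a1 * P + w1) % P = w1 := by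
    rw [show a1 * P + w1 = P * a1 + w1 by ring, Nat.mul_add_mod, Nat.mod_eq_of_lt h1]
  have d2 : (a2 * P + w2) % P = w2 := by
    rw [show a2 * P + w2 = P * a2 + w2 by ring, Nat.mul_add_mod, Nat.mod_eq_of_lt h2]
  have hw : w1 = w2 := by rw [← d1, ← d2, h]
  subst hw
  exact ⟨Nat.eq_of_mul_eq_mul_right hP (by omega), rfl⟩


lemma main_aux (p : ℕ) [Fact p.Prime] (F : Type*) [Field F] [CharP F p]
    (γ : F) (hγ : γ ≠ 0) (n : ℕ) (hn : 1 ≤ n) (k t τ d r : ℕ)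
    (hτ1 : 1 ≤ τ) (hd : d < p) (hr : r < p ^ t)
    (hgood : τ ≤ d ∨ (τ - 1 ≤ d ∧ 1 ≤ r)) :
    (τ + 1) * p ^ k ≤
      ((X ^ n + C γ) ^ ((p ^ k - 1) * p ^ (t + 1) + (d * p ^ t + r)) : F[X]).support.card := by
  have hp : p.Prime := Fact.out
  have hp2 : 2 ≤ p := hp.two_le
  have hP0 : 0 < p ^ t := pow_pos hp.pos t
  have hQ0 : 0 < p ^ (t+1) := pow_pos hp.pos _
  have hQeq : p ^ (t+1) = p * p ^ t := by ring
  have hdP : d * p ^ t + r < p ^ (t+1) := by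
    have h1 : (d+1) * p ^ t ≤ p * p ^ t := Nat.mul_le_mul_right _ (by omega)
    have h2 : (d+1) * p ^ t = d * p ^ t + p ^ t := by ring
    omega
  have hbc_lt : ∀ b c : ℕ, b ≤ d → c ≤ r → b * p ^ t + c < p ^ (t+1) := by
    intro b c hb hc
    have : b * p ^ t ≤ d * p ^ t := Nat.mul_le_mul_right _ hb
    omega
  have hmem : ∀ j : ℕ, j ≤ (p ^ k - 1) * p ^ (t+1) + (d * p ^ t + r) →
      ((((p ^ k - 1) * p ^ (t+1) + (d * p ^ t + r)).choose j : ZMod p)) ≠ 0 →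
      n * j ∈ (((X ^ n + C γ) ^ ((p ^ k - 1) * p ^ (t+1) + (d * p ^ t + r)) : F[X])).support := by
    intro j hj hz
    rw [mem_support_iff, coeff_pow_eq F γ n (by omega) _ j hj]
    refine mul_ne_zero ?_ (pow_ne_zero _ hγ)
    intro h0
    exact hz ((ZMod.natCast_eq_zero_iff _ _).mpr
      ((CharP.cast_eq_zero_iff F p _).mp h0))
  have hchoose : ∀ a b c : ℕ, a < p ^ k → b ≤ d → (c = 0 ∨ c = r) →
      ((((p ^ k - 1) * p ^ (t+1) + (d * p ^ t + r)).choose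
        (a * p ^ (t+1) + (b * p ^ t + c)) : ZMod p)) ≠ 0 := by
    intro a b c ha hb hc
    have hcr : c ≤ r := by rcases hc with rfl | rfl <;> omega
    have hc' : c < p ^ t := by omega
    rw [block_lucas p (t+1) _ _ _ _ hdP (hbc_lt b c hb hcr),
      block_lucas p t d r b c hr hc']
    refine mul_ne_zero (choose_pow_sub_one_ne_zero p k a ha)
      (mul_ne_zero (choose_small_ne_zero p hp hb hd) ?_)
    rcases hc with rfl | rfl <;> simp
  have hle : ∀ a b c : ℕ, a < p ^ k → b ≤ d → c ≤ r →
      a * p ^ (t+1) + (b * p ^ t + c) ≤ (p ^ k - 1) * p ^ (t+1) + (d * p ^ t + r) := by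
    intro a b c ha hb hc
    exact Nat.add_le_add (Nat.mul_le_mul_right _ (by omega))
      (Nat.add_le_add (Nat.mul_le_mul_right _ hb) hc)
  have key : ∀ B : Finset (ℕ × ℕ), (∀ x ∈ B, x.1 ≤ d ∧ (x.2 = 0 ∨ x.2 = r)) →
      (τ + 1) ≤ B.card →
      (τ + 1) * p ^ k ≤
        (((X ^ n + C γ) ^ ((p ^ k - 1) * p ^ (t+1) + (d * p ^ t + r)) : F[X])).support.card := by
    intro B hB hBcard
    have hinj : Set.InjOn
        (fun x : ℕ × ℕ × ℕ => n * (x.1 * p ^ (t+1) + (x.2.1 * p ^ t + x.2.2)))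
        ((Finset.range (p ^ k) ×ˢ B) : Finset (ℕ × (ℕ × ℕ))) := by
      intro x hx y hy hxy
      simp only [Finset.coe_product, Set.mem_prod, Finset.mem_coe, Finset.mem_range] at hx hy
      obtain ⟨hx1, hx2⟩ := hx
      obtain ⟨hy1, hy2⟩ := hy
      obtain ⟨hxd, hxc⟩ := hB _ hx2
      obtain ⟨hyd, hyc⟩ := hB _ hy2
      have hxcr : x.2.2 ≤ r := by rcases hxc with h | h <;> omega
      have hycr : y.2.2 ≤ r := by rcases hyc with h | h <;> omega
      have h0 := Nat.eq_of_mul_eq_mul_left (show 0 < n by omega) hxy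
      obtain ⟨ha, hw⟩ := digit_split (p ^ (t+1)) hQ0
        (hbc_lt _ _ hxd hxcr) (hbc_lt _ _ hyd hycr) h0
      obtain ⟨hb, hc⟩ := digit_split (p ^ t) hP0
        (by omega) (by omega) hw
      exact Prod.ext ha (Prod.ext hb hc)
    have hcardS : ((Finset.range (p ^ k) ×ˢ B).image
        (fun x : ℕ × ℕ × ℕ => n * (x.1 * p ^ (t+1) + (x.2.1 * p ^ t + x.2.2)))).card
        = p ^ k * B.card := by
      rw [Finset.card_image_of_injOn hinj, Finset.card_product, Finset.card_range]
    have hsub : ((Finset.range (p ^ k) ×ˢ B).image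
        (fun x : ℕ × ℕ × ℕ => n * (x.1 * p ^ (t+1) + (x.2.1 * p ^ t + x.2.2))))
        ⊆ (((X ^ n + C γ) ^ ((p ^ k - 1) * p ^ (t+1) + (d * p ^ t + r)) : F[X])).support := by
      intro y hy
      rw [Finset.mem_image] at hy
      obtain ⟨x, hx, rfl⟩ := hy
      simp only [Finset.mem_product, Finset.mem_range] at hx
      obtain ⟨hxd, hxc⟩ := hB _ hx.2
      have hxcr : x.2.2 ≤ r := by rcases hxc with h | h <;> omega
      exact hmem _ (hle _ _ _ hx.1 hxd hxcr) (hchoose _ _ _ hx.1 hxd hxc)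
    calc (τ + 1) * p ^ k ≤ B.card * p ^ k := Nat.mul_le_mul_right _ hBcard
      _ = p ^ k * B.card := mul_comm _ _
      _ = _ := hcardS.symm
      _ ≤ _ := Finset.card_le_card hsub
  rcases hgood with hgd | ⟨hgd, hr1⟩
  · refine key ((Finset.range (τ+1)) ×ˢ {0}) ?_ ?_
    · intro x hx
      simp only [Finset.mem_product, Finset.mem_range, Finset.mem_singleton] at hx
      exact ⟨by omega, Or.inl hx.2⟩
    · rw [Finset.card_product, Finset.card_range, Finset.card_singleton]
      omega
  · refine key ((Finset.range τ) ×ˢ {0, r}) ?_ ?_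
    · intro x hx
      simp only [Finset.mem_product, Finset.mem_range, Finset.mem_insert,
        Finset.mem_singleton] at hx
      exact ⟨by omega, hx.2⟩
    · rw [Finset.card_product, Finset.card_range,
        Finset.card_insert_of_notMem (by simp; omega), Finset.card_singleton]
      omega

theorem stmt_9 (p s : ℕ) (hp : p.Prime) (hs : 1 ≤ s)
    (F : Type*) [Field F] [Fintype F] [CharP F p]
    (γ : F) (hγ : γ ≠ 0) (n : ℕ) (hn : 1 ≤ n)
    (k τ m : ℕ) (hk1 : 1 ≤ k) (hk2 : k ≤ s - 1) (hτ1 : 1 ≤ τ) (hτ2 : τ ≤ p - 1)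
    (hm : m < p ^ (s - k) - (τ - 1) * p ^ (s - k - 1) - 1) :
    (τ + 1) * p ^ k ≤
      ((X ^ n + C γ) ^ (m + p ^ s - p ^ (s - k) + (τ - 1) * p ^ (s - k - 1) + 1) :
        F[X]).support.card := by
  haveI : Fact p.Prime := ⟨hp⟩
  have hp2 : 2 ≤ p := hp.two_le
  obtain ⟨t, ht⟩ : ∃ t, s - k = t + 1 := ⟨s - k - 1, by omega⟩
  have ht1 : s - k - 1 = t := by omega
  rw [ht1, ht] at hm ⊢
  have hP0 : 0 < p ^ t := pow_pos hp.pos t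
  have hQeq : p ^ (t+1) = p * p ^ t := by ring
  have hpk1 : 1 ≤ p ^ k := Nat.one_le_pow _ _ hp.pos
  have hps : p ^ s = p ^ k * p ^ (t+1) := by
    rw [← pow_add]; congr 1; omega
  have hQs : p ^ (t+1) ≤ p ^ s := by
    rw [hps]; exact Nat.le_mul_of_pos_left _ hpk1
  have hXle : (τ-1) * p ^ t + 2 * p ^ t ≤ p ^ (t+1) := by
    rw [hQeq]
    calc (τ-1) * p ^ t + 2 * p ^ t = (τ-1+2) * p ^ t := by ring
      _ ≤ p * p ^ t := Nat.mul_le_mul_right _ (by omega)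
  have hL : (τ-1) * p ^ t + (m+1) < p ^ (t+1) := by omega
  obtain ⟨q, r, hqr, hr⟩ : ∃ q r, q * p ^ t + r = m + 1 ∧ r < p ^ t :=
    ⟨(m+1) / p ^ t, (m+1) % p ^ t, by rw [mul_comm]; exact Nat.div_add_mod _ _,
      Nat.mod_lt _ hP0⟩
  obtain ⟨d, hdd⟩ : ∃ d, d = τ - 1 + q := ⟨_, rfl⟩
  have hdmul : d * p ^ t = (τ-1) * p ^ t + q * p ^ t := by rw [hdd, add_mul]
  have hdP : d * p ^ t + r < p ^ (t+1) := by omega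
  have hdlt : d < p := by
    have h1 : d * p ^ t < p * p ^ t := by omega
    exact Nat.lt_of_mul_lt_mul_right h1
  have h1 : (p ^ k - 1) * p ^ (t+1) + p ^ (t+1) = p ^ k * p ^ (t+1) := by
    have : (p ^ k - 1) * p ^ (t+1) + p ^ (t+1) = (p ^ k - 1 + 1) * p ^ (t+1) := by ring
    rw [this]
    congr 1
    omega
  have he : m + p ^ s - p ^ (t+1) + (τ-1) * p ^ t + 1
      = (p ^ k - 1) * p ^ (t+1) + (d * p ^ t + r) := by omega
  rw [he]
  refine main_aux p F γ hγ n hn k t τ d r hτ1 hdlt hr ?_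
  by_cases hq : 1 ≤ q
  · exact Or.inl (by omega)
  · have hq0 : q = 0 := by omega
    subst hq0
    exact Or.inr ⟨by omega, by omega⟩
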